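/- The minimum cardinality of a hitting set of the triangles of Σ, the complement of the Schläfli graph, is exactly 10: Σ admits a hitting set of its triangles of cardinality 10, and every hitting set of the triangles of Σ has cardinality at least 10. -/

import Mathlib

/-- The complement of the Schläfli graph: vertices are triples (tile, line, column);
tile 0 holds the vertices r^i_j, tile 1 the vertices s^i_j, tile 2 the vertices t^i_j
(indices shifted to start at 0). -/
def SchlafliC : SimpleGraph (Fin 3 × Fin 3 × Fin 3) where
  Adj x y :=
    (x.1 = y.1 ∧ x.2.1 ≠ y.2.1 ∧ x.2.2 ≠ y.2.2) ∨
    (y.1 = x.1 + 1 ∧ x.2.2 = y.2.1) ∨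
    (x.1 = y.1 + 1 ∧ y.2.2 = x.2.1)
  symm := by
    refine ⟨?_⟩
    rintro x y (⟨h1, h2, h3⟩ | ⟨h1, h2⟩ | ⟨h1, h2⟩)
    · exact Or.inl ⟨h1.symm, Ne.symm h2, Ne.symm h3⟩
    · exact Or.inr (Or.inr ⟨h1, h2⟩)
    · exact Or.inr (Or.inl ⟨h1, h2⟩)
  loopless := by
    refine ⟨?_⟩
    rintro x (⟨h1, h2, h3⟩ | ⟨h1, h2⟩ | ⟨h1, h2⟩)
    · exact h2 rfl
    · exact absurd h1 (by simp [Fin.ext_iff])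
    · exact absurd h1 (by simp [Fin.ext_iff])

abbrev V3 := Fin 3 × Fin 3 × Fin 3

instance decAdj (x y : V3) : Decidable (SchlafliC.Adj x y) :=
  inferInstanceAs (Decidable ((x.1 = y.1 ∧ x.2.1 ≠ y.2.1 ∧ x.2.2 ≠ y.2.2) ∨
    (y.1 = x.1 + 1 ∧ x.2.2 = y.2.1) ∨
    (x.1 = y.1 + 1 ∧ y.2.2 = x.2.1)))

/-- The 45 triangles of the graph. -/
def tris : List (V3 × V3 × V3) := [
  ((0,0,0), (0,1,1), (0,2,2)),
  ((0,0,0), (0,1,2), (0,2,1)),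
  ((0,0,0), (1,0,0), (2,0,0)),
  ((0,0,0), (1,0,1), (2,1,0)),
  ((0,0,0), (1,0,2), (2,2,0)),
  ((0,0,1), (0,1,0), (0,2,2)),
  ((0,0,1), (0,1,2), (0,2,0)),
  ((0,0,1), (1,1,0), (2,0,0)),
  ((0,0,1), (1,1,1), (2,1,0)),
  ((0,0,1), (1,1,2), (2,2,0)),
  ((0,0,2), (0,1,0), (0,2,1)),
  ((0,0,2), (0,1,1), (0,2,0)),
  ((0,0,2), (1,2,0), (2,0,0)),
  ((0,0,2), (1,2,1), (2,1,0)),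
  ((0,0,2), (1,2,2), (2,2,0)),
  ((0,1,0), (1,0,0), (2,0,1)),
  ((0,1,0), (1,0,1), (2,1,1)),
  ((0,1,0), (1,0,2), (2,2,1)),
  ((0,1,1), (1,1,0), (2,0,1)),
  ((0,1,1), (1,1,1), (2,1,1)),
  ((0,1,1), (1,1,2), (2,2,1)),
  ((0,1,2), (1,2,0), (2,0,1)),
  ((0,1,2), (1,2,1), (2,1,1)),
  ((0,1,2), (1,2,2), (2,2,1)),
  ((0,2,0), (1,0,0), (2,0,2)),
  ((0,2,0), (1,0,1), (2,1,2)),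
  ((0,2,0), (1,0,2), (2,2,2)),
  ((0,2,1), (1,1,0), (2,0,2)),
  ((0,2,1), (1,1,1), (2,1,2)),
  ((0,2,1), (1,1,2), (2,2,2)),
  ((0,2,2), (1,2,0), (2,0,2)),
  ((0,2,2), (1,2,1), (2,1,2)),
  ((0,2,2), (1,2,2), (2,2,2)),
  ((1,0,0), (1,1,1), (1,2,2)),
  ((1,0,0), (1,1,2), (1,2,1)),
  ((1,0,1), (1,1,0), (1,2,2)),
  ((1,0,1), (1,1,2), (1,2,0)),
  ((1,0,2), (1,1,0), (1,2,1)),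
  ((1,0,2), (1,1,1), (1,2,0)),
  ((2,0,0), (2,1,1), (2,2,2)),
  ((2,0,0), (2,1,2), (2,2,1)),
  ((2,0,1), (2,1,0), (2,2,2)),
  ((2,0,1), (2,1,2), (2,2,0)),
  ((2,0,2), (2,1,0), (2,2,1)),
  ((2,0,2), (2,1,1), (2,2,0)),
  ]

def Tri : Finset (Finset V3) := (tris.map (fun p => ({p.1, p.2.1, p.2.2} : Finset V3))).toFinset

def S10 : Finset V3 := {(0,0,0), (0,0,1), (0,0,2), (1,0,0), (2,1,1), (2,2,1),
  (1,1,0), (1,2,0), (2,1,2), (2,2,2)}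

set_option maxRecDepth 10000 in
lemma Tri_card : Tri.card = 45 := by decide

set_option maxRecDepth 10000 in
set_option maxHeartbeats 1000000 in
lemma mem_five : ∀ v : V3, (Tri.filter (fun t => v ∈ t)).card = 5 := by decide

lemma tris_adj_bool : tris.all (fun p => decide (SchlafliC.Adj p.1 p.2.1) &&
    decide (SchlafliC.Adj p.1 p.2.2) && decide (SchlafliC.Adj p.2.1 p.2.2)) = true := by rfl

lemma tris_adj : ∀ p ∈ tris, SchlafliC.Adj p.1 p.2.1 ∧ SchlafliC.Adj p.1 p.2.2 ∧
    SchlafliC.Adj p.2.1 p.2.2 := by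
  intro p hp
  have := List.all_eq_true.mp tris_adj_bool p hp
  simp only [Bool.and_eq_true, decide_eq_true_eq] at this
  exact ⟨this.1.1, this.1.2, this.2⟩

set_option maxRecDepth 10000 in
set_option maxHeartbeats 2000000 in
set_option synthInstance.maxSize 2000 in
lemma edge_in_tri : ∀ u v : V3, SchlafliC.Adj u v → ∃ t ∈ Tri, u ∈ t ∧ v ∈ t := by decide

set_option maxRecDepth 10000 in
set_option synthInstance.maxSize 4000 in
lemma rowcol : ∀ T : Finset (Fin 3 × Fin 3), T.card = 3 →
    (∀ u ∈ T, ∀ v ∈ T, u ≠ v → ¬(u.1 ≠ v.1 ∧ u.2 ≠ v.2)) →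
    (∃ i, T = {(i,0),(i,1),(i,2)}) ∨ (∃ j, T = {(0,j),(1,j),(2,j)}) := by decide

set_option maxRecDepth 10000 in
lemma card_le_three : ∀ T : Finset (Fin 3 × Fin 3),
    (∀ u ∈ T, ∀ v ∈ T, u ≠ v → ¬(u.1 ≠ v.1 ∧ u.2 ≠ v.2)) → T.card ≤ 3 := by decide

lemma noIndep9 (S : Finset V3) (h9 : S.card = 9)
    (hind : ∀ u ∈ S, ∀ v ∈ S, u ≠ v → ¬ SchlafliC.Adj u v) : False := by
  set Sk : Fin 3 → Finset (Fin 3 × Fin 3) :=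
    fun k => (S.filter (fun x => x.1 = k)).image Prod.snd with hSk
  have hmem : ∀ (k : Fin 3) (p : Fin 3 × Fin 3), p ∈ Sk k ↔ (k, p) ∈ S := by
    intro k p
    simp only [hSk, Finset.mem_image, Finset.mem_filter]
    constructor
    · rintro ⟨⟨x1, x2⟩, ⟨hxS, hx1⟩, hx2⟩
      simp only at hx1 hx2
      rw [hx1, hx2] at hxS; exact hxS
    · intro h; exact ⟨(k, p), ⟨h, rfl⟩, rfl⟩
  have hindk : ∀ k : Fin 3, ∀ u ∈ Sk k, ∀ v ∈ Sk k, u ≠ v →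
      ¬(u.1 ≠ v.1 ∧ u.2 ≠ v.2) := by
    rintro k u hu v hv huv ⟨h1, h2⟩
    exact hind (k, u) ((hmem k u).mp hu) (k, v) ((hmem k v).mp hv)
      (fun h => huv (congrArg Prod.snd h)) (Or.inl ⟨rfl, h1, h2⟩)
  have hcardk : ∀ k : Fin 3, (S.filter (fun x => x.1 = k)).card = (Sk k).card := by
    intro k
    rw [hSk]
    rw [Finset.card_image_of_injOn]
    intro x hx y hy hxy
    simp only [Finset.mem_coe, Finset.mem_filter] at hx hy
    exact Prod.ext (hx.2.trans hy.2.symm) hxy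
  have hsum : ∑ k : Fin 3, (S.filter (fun x => x.1 = k)).card = 9 := by
    rw [← h9]
    exact (Finset.card_eq_sum_card_fiberwise (fun x _ => Finset.mem_univ x.1)).symm
  have hle : ∀ k : Fin 3, (Sk k).card ≤ 3 := fun k => card_le_three _ (hindk k)
  have hsum' : ∑ k : Fin 3, (Sk k).card = ∑ k : Fin 3, 3 := by
    rw [← Finset.sum_congr rfl (fun k _ => hcardk k), hsum]; rfl
  have h3 : ∀ k : Fin 3, (Sk k).card = 3 := by
    intro k
    exact (Finset.sum_eq_sum_iff_of_le (fun i _ => hle i)).mp hsum' k (Finset.mem_univ k)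
  have kne : ∀ k : Fin 3, k ≠ k + 1 := by decide
  have hnorow : ∀ (k : Fin 3) (i : Fin 3), Sk k ≠ {(i,0),(i,1),(i,2)} := by
    intro k i hrow
    obtain ⟨⟨q1, q2⟩, hq⟩ := Finset.card_pos.mp (by rw [h3 (k+1)]; norm_num)
    have hq' : ((k+1 : Fin 3), (q1, q2)) ∈ S := (hmem _ _).mp hq
    have hp : ((i : Fin 3), q1) ∈ Sk k := by rw [hrow]; fin_cases q1 <;> simp
    have hp' : ((k : Fin 3), ((i : Fin 3), q1)) ∈ S := (hmem _ _).mp hp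
    exact hind _ hp' _ hq' (fun h => kne k (congrArg Prod.fst h))
      (Or.inr (Or.inl ⟨rfl, rfl⟩))
  have hcol : ∀ k : Fin 3, ∃ j, Sk k = {(0,j),(1,j),(2,j)} := by
    intro k
    rcases rowcol (Sk k) (h3 k) (hindk k) with ⟨i, h⟩ | h
    · exact absurd h (hnorow k i)
    · exact h
  obtain ⟨c0, h0⟩ := hcol 0
  obtain ⟨c1, h1⟩ := hcol 1
  have hx : ((0 : Fin 3), (c1, c0)) ∈ S := (hmem _ _).mp (by rw [h0]; fin_cases c1 <;> simp)
  have hy : ((1 : Fin 3), (c0, c1)) ∈ S := (hmem _ _).mp (by rw [h1]; fin_cases c0 <;> simp)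
  exact hind _ hx _ hy (fun h => by simpa using congrArg Prod.fst h)
    (Or.inr (Or.inl ⟨rfl, rfl⟩))

/-- The minimum cardinality of a hitting set of the triangles of the complement of the
Schläfli graph is exactly 10. -/
theorem schlafli_min_hitting_set_card_eq_ten :
    (∃ S : Finset (Fin 3 × Fin 3 × Fin 3), S.card = 10 ∧
      ∀ a b c : Fin 3 × Fin 3 × Fin 3, SchlafliC.Adj a b → SchlafliC.Adj a c →
        SchlafliC.Adj b c → (a ∈ S ∨ b ∈ S ∨ c ∈ S)) ∧
    (∀ S : Finset (Fin 3 × Fin 3 × Fin 3),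
      (∀ a b c : Fin 3 × Fin 3 × Fin 3, SchlafliC.Adj a b → SchlafliC.Adj a c →
        SchlafliC.Adj b c → (a ∈ S ∨ b ∈ S ∨ c ∈ S)) → 10 ≤ S.card) := by
  constructor
  · refine ⟨S10, by decide, ?_⟩
    set_option maxRecDepth 10000 in
    set_option maxHeartbeats 2000000 in
    set_option synthInstance.maxSize 2000 in
    decide
  · intro S H
    -- every triangle of Tri is hit
    have hhit : ∀ t ∈ Tri, 1 ≤ ((t ∩ S).card : ℕ) := by
      intro t ht
      obtain ⟨p, hp, hpt⟩ := List.mem_map.mp (List.mem_toFinset.mp ht)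
      obtain ⟨h1, h2, h3⟩ := tris_adj p hp
      rcases H p.1 p.2.1 p.2.2 h1 h2 h3 with h | h | h
      · exact Finset.card_pos.mpr ⟨p.1, Finset.mem_inter.mpr
          ⟨hpt ▸ Finset.mem_insert_self _ _, h⟩⟩
      · exact Finset.card_pos.mpr ⟨p.2.1, Finset.mem_inter.mpr
          ⟨hpt ▸ Finset.mem_insert_of_mem (Finset.mem_insert_self _ _), h⟩⟩
      · exact Finset.card_pos.mpr ⟨p.2.2, Finset.mem_inter.mpr
          ⟨hpt ▸ Finset.mem_insert_of_mem (Finset.mem_insert_of_mem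
            (Finset.mem_singleton_self _)), h⟩⟩
    -- double counting
    have key : ∑ t ∈ Tri, (t ∩ S).card = ∑ v ∈ S, (Tri.filter (fun t => v ∈ t)).card := by
      have h1 : ∀ t : Finset V3, (t ∩ S).card = ∑ v ∈ S, if v ∈ t then 1 else 0 := by
        intro t
        rw [Finset.inter_comm, ← Finset.filter_mem_eq_inter, Finset.card_filter]
      simp only [h1, Finset.card_filter]
      exact Finset.sum_comm
    have hsum : ∑ t ∈ Tri, (t ∩ S).card = 5 * S.card := by
      rw [key]
      rw [Finset.sum_congr rfl (fun v _ => mem_five v), Finset.sum_const, smul_eq_mul,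
        mul_comm]
    have hlow : 45 ≤ ∑ t ∈ Tri, (t ∩ S).card := by
      calc (45 : ℕ) = ∑ _t ∈ Tri, 1 := by
            rw [Finset.sum_const, smul_eq_mul, mul_one, Tri_card]
        _ ≤ _ := Finset.sum_le_sum hhit
    have h9 : 9 ≤ S.card := by omega
    by_contra hlt
    push_neg at hlt
    have h9' : S.card = 9 := by omega
    have heq : ∑ t ∈ Tri, (1 : ℕ) = ∑ t ∈ Tri, (t ∩ S).card := by
      rw [hsum, h9', Finset.sum_const, smul_eq_mul, mul_one, Tri_card]
    have hone : ∀ t ∈ Tri, (t ∩ S).card = 1 := by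
      intro t ht
      exact ((Finset.sum_eq_sum_iff_of_le hhit).mp heq t ht).symm
    have hind : ∀ u ∈ S, ∀ v ∈ S, u ≠ v → ¬ SchlafliC.Adj u v := by
      intro u hu v hv huv hadj
      obtain ⟨t, ht, hut, hvt⟩ := edge_in_tri u v hadj
      have h2 : 2 ≤ (t ∩ S).card := by
        have hsub : ({u, v} : Finset V3) ⊆ t ∩ S := by
          intro x hx
          rcases Finset.mem_insert.mp hx with h | h
          · exact h ▸ Finset.mem_inter.mpr ⟨hut, hu⟩
          · exact (Finset.mem_singleton.mp h) ▸ Finset.mem_inter.mpr ⟨hvt, hv⟩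
        calc 2 = ({u, v} : Finset V3).card := (Finset.card_pair huv).symm
          _ ≤ _ := Finset.card_le_card hsub
      have := hone t ht
      omega
    exact noIndep9 S h9' hind
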